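/- Let S be a completely positive linear map from operators on H_out ⊗ H_in to operators on K_out ⊗ K_in. Then S maps every Choi operator of a channel (E ≥ 0 with Tr_{H_out}[E] = I_{H_in}) to a Choi operator of a channel (Tr_{K_out}[S(E)] = I_{K_in}) if and only if there exists a completely positive trace-preserving map N_* from End(K_in) to End(H_in) such that the dual map S_* satisfies S_*(I_{K_out} ⊗ ρ) = I_{H_out} ⊗ N_*(ρ) for every operator ρ on K_in. -/

import Mathlib

open Matrix Kronecker BigOperators ComplexOrder

/-- Partial trace over the first tensor factor. -/
noncomputable def ptrFst {o i : Type*} [Fintype o] (M : Matrix (o × i) (o × i) ℂ) :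
    Matrix i i ℂ :=
  Matrix.of fun a b => ∑ k, M (k, a) (k, b)

/-- Partial trace over the second tensor factor. -/
noncomputable def ptrSnd {o i : Type*} [Fintype i] (M : Matrix (o × i) (o × i) ℂ) :
    Matrix o o ℂ :=
  Matrix.of fun a b => ∑ k, M (a, k) (b, k)

/-- Choi operator of a linear map between matrix algebras. -/
noncomputable def choi {i o : Type*} [Fintype i] [DecidableEq i]
    (E : Matrix i i ℂ →ₗ[ℂ] Matrix o o ℂ) : Matrix (o × i) (o × i) ℂ :=
  ∑ m, ∑ n, (E (Matrix.single m n 1)) ⊗ₖ (Matrix.single m n 1)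

/-- Complete positivity, expressed via existence of a Kraus decomposition
(equivalent to the usual definition in finite dimensions). -/
def IsCP {i o : Type*} [Fintype i] [Fintype o]
    (E : Matrix i i ℂ →ₗ[ℂ] Matrix o o ℂ) : Prop :=
  ∃ (k : ℕ) (K : Fin k → Matrix o i ℂ), ∀ X, E X = ∑ j, K j * X * (K j)ᴴ

set_option linter.unusedSectionVars false

section Aux

lemma aux_trace_stdBasis {n : Type*} [Fintype n] [DecidableEq n] (X : Matrix n n ℂ) (a b : n) :
    (Matrix.single b a 1 * X).trace = X a b := by
  simp [Matrix.trace, Matrix.mul_apply, Matrix.single, Matrix.diag, ite_and,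
    Finset.sum_ite_eq]

lemma matrix_ext_of_trace {n : Type*} [Fintype n] [DecidableEq n] {X Y : Matrix n n ℂ}
    (h : ∀ A, (A * X).trace = (A * Y).trace) : X = Y := by
  ext a b
  have := h (Matrix.single b a 1)
  rwa [aux_trace_stdBasis, aux_trace_stdBasis] at this

variable {o i : Type*} [Fintype o] [Fintype i] [DecidableEq o] [DecidableEq i]

lemma ptrFst_add (M N : Matrix (o × i) (o × i) ℂ) : ptrFst (M + N) = ptrFst M + ptrFst N := by
  ext a b; simp [ptrFst, Finset.sum_add_distrib]

lemma ptrFst_sub (M N : Matrix (o × i) (o × i) ℂ) : ptrFst (M - N) = ptrFst M - ptrFst N := by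
  ext a b; simp [ptrFst, Finset.sum_sub_distrib]

lemma ptrFst_smul (c : ℂ) (M : Matrix (o × i) (o × i) ℂ) : ptrFst (c • M) = c • ptrFst M := by
  ext a b; simp [ptrFst, Finset.mul_sum]

lemma ptrFst_zero : ptrFst (0 : Matrix (o × i) (o × i) ℂ) = 0 := by
  ext a b; simp [ptrFst]

lemma ptrFst_conjTranspose (M : Matrix (o × i) (o × i) ℂ) : ptrFst Mᴴ = (ptrFst M)ᴴ := by
  ext a b; simp [ptrFst, Matrix.conjTranspose_apply, map_sum]

lemma ptrFst_one : ptrFst (1 : Matrix (o × i) (o × i) ℂ) = (Fintype.card o : ℂ) • 1 := by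
  ext a b
  simp [ptrFst, Matrix.one_apply, Prod.ext_iff, ite_and, Finset.sum_ite_eq, Matrix.smul_apply,
    Finset.card_univ]

lemma ptrFst_kron_one (ρ : Matrix i i ℂ) :
    ptrFst ((1 : Matrix o o ℂ) ⊗ₖ ρ) = (Fintype.card o : ℂ) • ρ := by
  ext a b
  simp [ptrFst, Matrix.one_apply, Finset.card_univ, Matrix.smul_apply, mul_comm]

lemma ptrFst_trace (M : Matrix (o × i) (o × i) ℂ) : (ptrFst M).trace = M.trace := by
  simp only [Matrix.trace, Matrix.diag, ptrFst, Matrix.of_apply, Fintype.sum_prod_type]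
  rw [Finset.sum_comm]

lemma trace_mul_kron_one (M : Matrix (o × i) (o × i) ℂ) (ρ : Matrix i i ℂ) :
    (M * ((1 : Matrix o o ℂ) ⊗ₖ ρ)).trace = (ptrFst M * ρ).trace := by
  simp only [Matrix.trace, Matrix.diag, Matrix.mul_apply, ptrFst, Matrix.of_apply,
    Matrix.kroneckerMap_apply, Matrix.one_apply, Fintype.sum_prod_type, mul_ite, mul_one, mul_zero,
    ite_mul, zero_mul, Finset.sum_ite_irrel, Finset.sum_const_zero, Finset.sum_ite_eq',
    Finset.sum_ite_eq, Finset.mem_univ, if_true, Finset.sum_mul, Finset.mul_sum]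
  rw [Finset.sum_comm]
  refine Finset.sum_congr rfl fun x _ => ?_
  rw [Finset.sum_comm]
  exact Finset.sum_congr rfl fun y _ => Finset.sum_congr rfl fun a _ => by ring

lemma psd_smul_real {n : Type*} [Fintype n] {M : Matrix n n ℂ} (hM : M.PosSemidef)
    {r : ℝ} (hr : 0 ≤ r) : ((r : ℂ) • M).PosSemidef := by
  constructor
  · have h1 := hM.1
    unfold Matrix.IsHermitian at *
    rw [Matrix.conjTranspose_smul, h1]
    simp [Complex.conj_ofReal]
  · exact (hM.smul (a := (r : ℂ)) (by exact_mod_cast Complex.zero_le_real.2 hr)).2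

lemma exists_shift_posSemidef {n : Type*} [Fintype n] [DecidableEq n]
    {H : Matrix n n ℂ} (hH : H.IsHermitian) :
    ∃ c : ℝ, 0 < c ∧ ((c : ℂ) • (1 : Matrix n n ℂ) + H).PosSemidef := by
  set c : ℝ := 1 + ∑ j, |hH.eigenvalues j| with hc
  have hcpos : 0 < c := by positivity
  refine ⟨c, hcpos, ?_⟩
  set U := (hH.eigenvectorUnitary : Matrix n n ℂ) with hU
  have hUU : U * star U = 1 := Matrix.mem_unitaryGroup_iff.mp hH.eigenvectorUnitary.2
  have key : (c : ℂ) • (1 : Matrix n n ℂ) + H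
      = U * Matrix.diagonal (fun j => ((c + hH.eigenvalues j : ℝ) : ℂ)) * star U := by
    have hst := hH.spectral_theorem
    have hdiag : Matrix.diagonal (fun j => ((c + hH.eigenvalues j : ℝ) : ℂ))
        = (c : ℂ) • (1 : Matrix n n ℂ) + Matrix.diagonal (RCLike.ofReal ∘ hH.eigenvalues) := by
      ext a b
      by_cases h : a = b <;> simp [h, Matrix.diagonal, Matrix.one_apply]
    rw [Unitary.conjStarAlgAut_apply, ← hU] at hst
    rw [hdiag, Matrix.mul_add, Matrix.add_mul, ← hst]
    congr 1
    rw [Matrix.mul_smul, Matrix.smul_mul, Matrix.mul_one, hUU]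
  rw [key, Matrix.star_eq_conjTranspose]
  have hD : (Matrix.diagonal (fun j => ((c + hH.eigenvalues j : ℝ) : ℂ))).PosSemidef := by
    refine Matrix.posSemidef_diagonal_iff.mpr fun j => ?_
    rw [Complex.zero_le_real]
    have h1 : |hH.eigenvalues j| ≤ ∑ k, |hH.eigenvalues k| :=
      Finset.single_le_sum (f := fun k => |hH.eigenvalues k|) (fun k _ => abs_nonneg _)
        (Finset.mem_univ j)
    have := neg_abs_le (hH.eigenvalues j)
    linarith
  exact hD.mul_mul_conjTranspose_same U

lemma herm_decomp {o i : Type*} [Fintype o] [Fintype i] [DecidableEq o] [DecidableEq i]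
    (X : Matrix (o × i) (o × i) ℂ) (hptr : ptrFst X = 0) :
    ∃ H1 H2 : Matrix (o × i) (o × i) ℂ, H1.IsHermitian ∧ H2.IsHermitian ∧
      ptrFst H1 = 0 ∧ ptrFst H2 = 0 ∧ X = H1 + Complex.I • H2 := by
  have hXH : ptrFst Xᴴ = 0 := by rw [ptrFst_conjTranspose, hptr]; simp
  refine ⟨(2⁻¹ : ℂ) • (X + Xᴴ), (2⁻¹ * Complex.I) • (Xᴴ - X), ?_, ?_, ?_, ?_, ?_⟩
  · rw [Matrix.IsHermitian, Matrix.conjTranspose_smul, Matrix.conjTranspose_add,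
      Matrix.conjTranspose_conjTranspose]
    have hst : star (2⁻¹ : ℂ) = (2⁻¹ : ℂ) := by simp
    rw [hst, add_comm]
  · rw [Matrix.IsHermitian, Matrix.conjTranspose_smul, Matrix.conjTranspose_sub,
      Matrix.conjTranspose_conjTranspose]
    have hst : star (2⁻¹ * Complex.I : ℂ) = -(2⁻¹ * Complex.I) := by
      simp [Complex.ext_iff]
    rw [hst]
    module
  · rw [ptrFst_smul, ptrFst_add, hptr, hXH]; simp
  · rw [ptrFst_smul, ptrFst_sub, hptr, hXH]; simp
  · rw [smul_smul]
    have hIs : Complex.I * (2⁻¹ * Complex.I) = -2⁻¹ := by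
      rw [mul_comm, mul_assoc, Complex.I_mul_I]; ring
    rw [hIs]
    module

end Aux

section Kraus

noncomputable def embV {ko ki : Type*} [DecidableEq ko] [DecidableEq ki] (a : ko) :
    Matrix (ko × ki) ki ℂ :=
  Matrix.of fun p x => if p = (a, x) then 1 else 0

noncomputable def prW {o i : Type*} [DecidableEq o] [DecidableEq i] (b : o) :
    Matrix i (o × i) ℂ :=
  Matrix.of fun x p => if p = (b, x) then 1 else 0

variable {o i ko ki : Type*} [Fintype o] [Fintype i] [Fintype ko] [Fintype ki]
  [DecidableEq o] [DecidableEq i] [DecidableEq ko] [DecidableEq ki]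

lemma kron_eq_sum_embV (ρ : Matrix ki ki ℂ) :
    (1 : Matrix ko ko ℂ) ⊗ₖ ρ = ∑ a : ko, embV (ki := ki) a * ρ * (embV (ki := ki) a)ᴴ := by
  ext ⟨c, y⟩ ⟨c', y'⟩
  simp only [Matrix.kroneckerMap_apply, Matrix.one_apply, Matrix.sum_apply, Matrix.mul_apply,
    Matrix.conjTranspose_apply, embV, Matrix.of_apply, Prod.mk.injEq, ite_and, ite_mul, one_mul,
    zero_mul, mul_ite, mul_one, mul_zero, Finset.sum_ite_irrel, Finset.sum_const_zero,
    Finset.sum_ite_eq', Finset.sum_ite_eq, Finset.mem_univ, if_true,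
    apply_ite (starRingEnd ℂ), apply_ite (star : ℂ → ℂ), star_one, star_zero,
    _root_.map_one, _root_.map_zero]

lemma ptrFst_eq_sum_prW (M : Matrix (o × i) (o × i) ℂ) :
    ptrFst M = ∑ b : o, prW (i := i) b * M * (prW (i := i) b)ᴴ := by
  ext x x'
  simp only [ptrFst, Matrix.of_apply, Matrix.sum_apply, Matrix.mul_apply,
    Matrix.conjTranspose_apply, prW, Prod.mk.injEq, ite_and, ite_mul, one_mul,
    zero_mul, mul_ite, mul_one, mul_zero, Finset.sum_ite_irrel, Finset.sum_const_zero,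
    Finset.sum_ite_eq', Finset.sum_ite_eq, Finset.mem_univ, if_true,
    apply_ite (starRingEnd ℂ), apply_ite (star : ℂ → ℂ), star_one, star_zero,
    _root_.map_one, _root_.map_zero, Fintype.sum_prod_type]

lemma isCP_of_fintype {i o : Type*} [Fintype i] [Fintype o]
    (E : Matrix i i ℂ →ₗ[ℂ] Matrix o o ℂ)
    (ι : Type*) [Fintype ι] (K : ι → Matrix o i ℂ)
    (h : ∀ X, E X = ∑ j, K j * X * (K j)ᴴ) : IsCP E := by
  refine ⟨Fintype.card ι, fun n => K ((Fintype.equivFin ι).symm n), fun X => ?_⟩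
  rw [h]
  exact Fintype.sum_equiv (Fintype.equivFin ι) _ _ (fun j => by simp)

lemma trace_conj_aux {n m : Type*} [Fintype n] [Fintype m]
    (K : Matrix m n ℂ) (A : Matrix n n ℂ) (B : Matrix m m ℂ) :
    ((K * A * Kᴴ) * B).trace = (A * (Kᴴ * B * K)).trace := by
  simp only [Matrix.mul_assoc]
  rw [Matrix.trace_mul_comm]
  simp only [Matrix.mul_assoc]

end Kraus

/-- A CP supermap `S` is deterministic (sends channel Choi operators to
channel Choi operators) iff its Hilbert–Schmidt dual `S_*` satisfies
`S_*(I ⊗ ρ) = I ⊗ N_*(ρ)` for some CP trace-preserving map `N_*`. -/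
theorem deterministic_iff_semicausal {i o ki ko : Type*}
    [Fintype i] [DecidableEq i] [Fintype o] [DecidableEq o] [Nonempty o]
    [Fintype ki] [DecidableEq ki] [Fintype ko] [DecidableEq ko] [Nonempty ko]
    (S : Matrix (o × i) (o × i) ℂ →ₗ[ℂ] Matrix (ko × ki) (ko × ki) ℂ)
    (hS : IsCP S)
    (Sd : Matrix (ko × ki) (ko × ki) ℂ →ₗ[ℂ] Matrix (o × i) (o × i) ℂ)
    (hdual : ∀ (A : Matrix (o × i) (o × i) ℂ) (B : Matrix (ko × ki) (ko × ki) ℂ),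
      (S A * B).trace = (A * Sd B).trace) :
    (∀ E : Matrix (o × i) (o × i) ℂ, E.PosSemidef → ptrFst E = 1 →
        ptrFst (S E) = 1) ↔
    (∃ N : Matrix ki ki ℂ →ₗ[ℂ] Matrix i i ℂ, IsCP N ∧
      (∀ ρ : Matrix ki ki ℂ, (N ρ).trace = ρ.trace) ∧
      ∀ ρ : Matrix ki ki ℂ,
        Sd ((1 : Matrix ko ko ℂ) ⊗ₖ ρ) = (1 : Matrix o o ℂ) ⊗ₖ N ρ) := by
  have hd : (Fintype.card o : ℂ) ≠ 0 := by
    simp [Fintype.card_ne_zero]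
  have hdr : (((Fintype.card o : ℝ)⁻¹ : ℝ) : ℂ) = (Fintype.card o : ℂ)⁻¹ := by
    push_cast
    ring
  constructor
  · -- forward direction
    intro hdet
    obtain ⟨k, K, hK⟩ := hS
    -- Kraus form of the dual
    have hSd : ∀ B, Sd B = ∑ j, (K j)ᴴ * B * K j := by
      intro B
      refine matrix_ext_of_trace fun A => ?_
      rw [← hdual A B, hK A, Finset.sum_mul, Matrix.trace_sum, Finset.mul_sum, Matrix.trace_sum]
      exact Finset.sum_congr rfl fun j _ => trace_conj_aux _ _ _
    -- the candidate map N
    set N : Matrix ki ki ℂ →ₗ[ℂ] Matrix i i ℂ :=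
      { toFun := fun ρ =>
          (Fintype.card o : ℂ)⁻¹ • ptrFst (Sd ((1 : Matrix ko ko ℂ) ⊗ₖ ρ))
        map_add' := fun ρ σ => by
          show (Fintype.card o : ℂ)⁻¹ • ptrFst (Sd ((1 : Matrix ko ko ℂ) ⊗ₖ (ρ + σ)))
              = (Fintype.card o : ℂ)⁻¹ • ptrFst (Sd ((1 : Matrix ko ko ℂ) ⊗ₖ ρ))
                + (Fintype.card o : ℂ)⁻¹ • ptrFst (Sd ((1 : Matrix ko ko ℂ) ⊗ₖ σ))
          rw [Matrix.kronecker_add, map_add, ptrFst_add, smul_add]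
        map_smul' := fun c ρ => by
          show (Fintype.card o : ℂ)⁻¹ • ptrFst (Sd ((1 : Matrix ko ko ℂ) ⊗ₖ (c • ρ)))
              = c • ((Fintype.card o : ℂ)⁻¹ •
                  ptrFst (Sd ((1 : Matrix ko ko ℂ) ⊗ₖ ρ)))
          rw [Matrix.kronecker_smul, _root_.map_smul, ptrFst_smul, smul_comm] }
      with hN_def
    have hNapp : ∀ ρ, N ρ
        = (Fintype.card o : ℂ)⁻¹ • ptrFst (Sd ((1 : Matrix ko ko ℂ) ⊗ₖ ρ)) := fun ρ => rfl
    -- pairing with channel Choi operators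
    have hEF : ∀ (ρ : Matrix ki ki ℂ) (E : Matrix (o × i) (o × i) ℂ), E.PosSemidef →
        ptrFst E = 1 → (E * Sd ((1 : Matrix ko ko ℂ) ⊗ₖ ρ)).trace = ρ.trace := by
      intro ρ E hE hptr
      rw [← hdual E, trace_mul_kron_one, hdet E hE hptr, Matrix.one_mul]
    -- vanishing on hermitian kernel elements
    have hzeroH : ∀ (ρ : Matrix ki ki ℂ) (X : Matrix (o × i) (o × i) ℂ), X.IsHermitian →
        ptrFst X = 0 → (X * Sd ((1 : Matrix ko ko ℂ) ⊗ₖ ρ)).trace = 0 := by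
      intro ρ X hX hptr
      obtain ⟨c, hc, hpsd⟩ := exists_shift_posSemidef hX
      set F := Sd ((1 : Matrix ko ko ℂ) ⊗ₖ ρ) with hF
      have hcne : (c : ℂ) ≠ 0 := by exact_mod_cast ne_of_gt hc
      have hcast : (((c * (Fintype.card o : ℝ))⁻¹ : ℝ) : ℂ)
          = ((c : ℂ) * (Fintype.card o : ℂ))⁻¹ := by
        push_cast
        ring
      have hE1psd : ((((c * (Fintype.card o : ℝ))⁻¹ : ℝ) : ℂ) •
          ((c : ℂ) • (1 : Matrix (o × i) (o × i) ℂ) + X)).PosSemidef :=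
        psd_smul_real hpsd (by positivity)
      have hE1ptr : ptrFst ((((c * (Fintype.card o : ℝ))⁻¹ : ℝ) : ℂ) •
          ((c : ℂ) • (1 : Matrix (o × i) (o × i) ℂ) + X)) = 1 := by
        rw [ptrFst_smul, ptrFst_add, ptrFst_smul, ptrFst_one, hptr, add_zero, smul_smul,
          smul_smul, hcast]
        have hsc : ((c : ℂ) * (Fintype.card o : ℂ))⁻¹ * (c : ℂ) * (Fintype.card o : ℂ)
            = 1 := by field_simp
        rw [hsc, one_smul]
      have h1 := hEF ρ _ hE1psd hE1ptr
      have hE2psd : ((((Fintype.card o : ℝ)⁻¹ : ℝ) : ℂ) •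
          (1 : Matrix (o × i) (o × i) ℂ)).PosSemidef :=
        psd_smul_real Matrix.PosSemidef.one (by positivity)
      have hE2ptr : ptrFst ((((Fintype.card o : ℝ)⁻¹ : ℝ) : ℂ) •
          (1 : Matrix (o × i) (o × i) ℂ)) = 1 := by
        rw [ptrFst_smul, ptrFst_one, smul_smul, hdr, inv_mul_cancel₀ hd, one_smul]
      have h2 := hEF ρ _ hE2psd hE2ptr
      rw [Matrix.smul_mul, Matrix.trace_smul, Matrix.add_mul, Matrix.trace_add,
        Matrix.smul_mul, Matrix.trace_smul, Matrix.one_mul, hcast] at h1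
      rw [Matrix.smul_mul, Matrix.trace_smul, Matrix.one_mul, hdr] at h2
      have h3 : ((c : ℂ) * (Fintype.card o : ℂ))⁻¹ * ((c : ℂ) * F.trace + (X * F).trace)
          = (Fintype.card o : ℂ)⁻¹ * F.trace := by
        simpa [smul_eq_mul] using h1.trans h2.symm
      field_simp at h3
      have h4 : (X * F).trace * (Fintype.card o : ℂ) = 0 := by linear_combination (Fintype.card o : ℂ) * h3
      exact (mul_eq_zero.mp h4).resolve_right hd
    -- vanishing on all kernel elements
    have hzero : ∀ (ρ : Matrix ki ki ℂ) (X : Matrix (o × i) (o × i) ℂ),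
        ptrFst X = 0 → (X * Sd ((1 : Matrix ko ko ℂ) ⊗ₖ ρ)).trace = 0 := by
      intro ρ X hptr
      obtain ⟨H1, H2, hH1herm, hH2herm, hptr1, hptr2, hdec⟩ := herm_decomp X hptr
      rw [hdec, Matrix.add_mul, Matrix.trace_add, Matrix.smul_mul, Matrix.trace_smul,
        hzeroH ρ H1 hH1herm hptr1, hzeroH ρ H2 hH2herm hptr2]
      simp
    -- the main structural identity
    have hmain : ∀ ρ, Sd ((1 : Matrix ko ko ℂ) ⊗ₖ ρ) = (1 : Matrix o o ℂ) ⊗ₖ N ρ := by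
      intro ρ
      refine matrix_ext_of_trace fun A => ?_
      set F := Sd ((1 : Matrix ko ko ℂ) ⊗ₖ ρ) with hF
      have hA0 : ptrFst (A - (Fintype.card o : ℂ)⁻¹ •
          ((1 : Matrix o o ℂ) ⊗ₖ ptrFst A)) = 0 := by
        rw [ptrFst_sub, ptrFst_smul, ptrFst_kron_one, smul_smul,
          inv_mul_cancel₀ hd, one_smul, sub_self]
      have h0 := hzero ρ _ hA0
      rw [Matrix.sub_mul, Matrix.trace_sub, Matrix.smul_mul, Matrix.trace_smul,
        sub_eq_zero] at h0
      rw [h0, hNapp, Matrix.kronecker_smul, Matrix.mul_smul, Matrix.trace_smul,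
        trace_mul_kron_one, Matrix.trace_mul_comm, trace_mul_kron_one, Matrix.trace_mul_comm]
    -- trace preservation
    have hTPmain : ∀ ρ, (N ρ).trace = ρ.trace := by
      intro ρ
      have hE2psd : ((((Fintype.card o : ℝ)⁻¹ : ℝ) : ℂ) •
          (1 : Matrix (o × i) (o × i) ℂ)).PosSemidef :=
        psd_smul_real Matrix.PosSemidef.one (by positivity)
      have hE2ptr : ptrFst ((((Fintype.card o : ℝ)⁻¹ : ℝ) : ℂ) •
          (1 : Matrix (o × i) (o × i) ℂ)) = 1 := by
        rw [ptrFst_smul, ptrFst_one, smul_smul, hdr, inv_mul_cancel₀ hd, one_smul]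
      have h2 := hEF ρ _ hE2psd hE2ptr
      rw [Matrix.smul_mul, Matrix.trace_smul, Matrix.one_mul, hdr] at h2
      rw [hNapp, Matrix.trace_smul, ptrFst_trace]
      exact h2
    -- complete positivity of N
    have hCP : IsCP N := by
      refine isCP_of_fintype N (o × Fin k × ko)
        (fun t => ((Real.sqrt ((Fintype.card o : ℝ)⁻¹) : ℝ) : ℂ) •
          (prW (i := i) t.1 * (K t.2.1)ᴴ * embV (ki := ki) t.2.2)) (fun ρ => ?_)
      rw [hNapp, hSd, kron_eq_sum_embV, ptrFst_eq_sum_prW]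
      have hrr : (((Real.sqrt ((Fintype.card o : ℝ)⁻¹) : ℝ) : ℂ) *
          ((Real.sqrt ((Fintype.card o : ℝ)⁻¹) : ℝ) : ℂ)) = (Fintype.card o : ℂ)⁻¹ := by
        rw [← Complex.ofReal_mul, Real.mul_self_sqrt (by positivity)]
        exact hdr
      simp only [Matrix.smul_mul, Matrix.mul_smul, Matrix.conjTranspose_smul,
        Matrix.conjTranspose_mul, Matrix.conjTranspose_conjTranspose, smul_smul,
        Complex.star_def, Complex.conj_ofReal, hrr]
      simp only [Fintype.sum_prod_type, Finset.mul_sum, Finset.sum_mul, Finset.smul_sum,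
        Matrix.sum_mul, Matrix.mul_sum, Matrix.smul_mul, Matrix.mul_smul, Matrix.mul_assoc]
    exact ⟨N, hCP, hTPmain, hmain⟩
  · -- reverse direction
    rintro ⟨N, _, hTP, hN⟩ E hE hptr
    refine matrix_ext_of_trace fun ρ => ?_
    rw [Matrix.mul_one, Matrix.trace_mul_comm, ← trace_mul_kron_one, hdual, hN,
      trace_mul_kron_one, hptr, Matrix.one_mul, hTP]
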